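/- Let A be a residuated lattice, F a filter of A, and n ≥ 1. The following are equivalent: (1) for any n + 1 pairwise distinct F-minimal prime filters m₀, …, mₙ, the join m₀ ∨ ⋯ ∨ mₙ in the lattice of filters equals A; (2) A is n-normal with respect to F; (3) for every prime filter P containing F, D_F(P) is an (n+1)-prime filter; (4) for any x₀, …, xₙ ∈ A with xᵢ ∨ xⱼ ∈ F for all i ≠ j, the join (F : x₀) ∨ ⋯ ∨ (F : xₙ) in the lattice of filters equals A; (5) for any x₀, …, xₙ ∈ A with xᵢ ∨ xⱼ ∈ F for all i ≠ j, there exist aᵢ ∈ (F : xᵢ) for each i with a₀ ⊙ ⋯ ⊙ aₙ = 0; (6) for any x₀, …, xₙ ∈ A, (F : x₀ ∨ ⋯ ∨ xₙ) = ⋁_{i=0}^{n} (F : ⋁_{j ≠ i} xⱼ) (join in the lattice of filters); (7) for any x₀, …, xₙ ∈ A, x₀ ∨ ⋯ ∨ xₙ ∈ F implies ⋁_{i=0}^{n} (F : ⋁_{j ≠ i} xⱼ) = A. -/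

import Mathlib

class ResiduatedLattice (α : Type*) extends Lattice α, CommMonoid α, BoundedOrder α where
  rimp : α → α → α
  one_eq_top : (1 : α) = ⊤
  adjunction : ∀ x y z : α, x * y ≤ z ↔ x ≤ rimp y z

variable {α : Type*} [ResiduatedLattice α]

/-- A filter of a residuated lattice: nonempty, closed under `⊙` and upward closed. -/
def IsFilter (F : Set α) : Prop :=
  F.Nonempty ∧ (∀ x ∈ F, ∀ y ∈ F, x * y ∈ F) ∧ ∀ x ∈ F, ∀ y : α, x ≤ y → y ∈ F

/-- A prime filter: a proper filter such that `x ⊔ y ∈ P` implies `x ∈ P` or `y ∈ P`. -/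
def IsPrimeFilter (P : Set α) : Prop :=
  IsFilter P ∧ P ≠ Set.univ ∧ ∀ x y : α, x ⊔ y ∈ P → x ∈ P ∨ y ∈ P

/-- A `∨`-closed subset: nonempty and closed under join. -/
def IsJoinClosed (C : Set α) : Prop :=
  C.Nonempty ∧ ∀ x ∈ C, ∀ y ∈ C, x ⊔ y ∈ C

/-- The filter generated by a set. -/
def filterGen (X : Set α) : Set α := ⋂₀ {G : Set α | IsFilter G ∧ X ⊆ G}

/-- An `X`-minimal prime filter: prime, contains `X`, minimal among primes containing `X`. -/
def IsMinPrimeOver (X P : Set α) : Prop :=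
  IsPrimeFilter P ∧ X ⊆ P ∧ ∀ Q : Set α, IsPrimeFilter Q → X ⊆ Q → Q ⊆ P → Q = P

/-- `ω_F(X) = {a | x ∨ a ∈ F for some x ∈ X}`. -/
def omegaF (F X : Set α) : Set α := {a : α | ∃ x ∈ X, x ⊔ a ∈ F}

/-- The coannihilator `(F : x) = {a | x ∨ a ∈ F}`. -/
def coann (F : Set α) (x : α) : Set α := {a : α | x ⊔ a ∈ F}

/-- `D_F(H) = {a | x ∨ a ∈ F for some x ∉ H}`, the set of `F`-divisors of `H`. -/
def divisorsF (F H : Set α) : Set α := {a : α | ∃ x ∉ H, x ⊔ a ∈ F}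

/-- A lattice ideal: nonempty, closed under join and downward closed. -/
def IsLatticeIdeal (I : Set α) : Prop :=
  I.Nonempty ∧ (∀ x ∈ I, ∀ y ∈ I, x ⊔ y ∈ I) ∧ ∀ x y : α, x ≤ y → y ∈ I → x ∈ I

/-- The lattice ideal generated by a set. -/
def idealGen (X : Set α) : Set α := ⋂₀ {I : Set α | IsLatticeIdeal I ∧ X ⊆ I}

/-- An `ω_F`-filter: a filter of the form `ω_F(I)` for some lattice ideal `I`. -/
def IsOmegaFilter (F H : Set α) : Prop :=
  IsFilter H ∧ ∃ I : Set α, IsLatticeIdeal I ∧ H = omegaF F I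

/-- `A` is `n`-normal with respect to `F`: every prime filter containing `F` contains at
most `n` distinct `F`-minimal prime filters. -/
def nNormalWrt (F : Set α) (n : ℕ) : Prop :=
  ∀ P : Set α, IsPrimeFilter P → F ⊆ P →
    ∀ m : Fin (n + 1) → Set α, (∀ i, IsMinPrimeOver F (m i) ∧ m i ⊆ P) →
      ¬ Function.Injective m

/-- A proper filter `G` is `k`-prime if it is the intersection of at most `k - 1` distinct
prime filters. -/
def kPrime (k : ℕ) (G : Set α) : Prop :=
  G ≠ Set.univ ∧ ∃ (m : ℕ) (P : Fin m → Set α), m ≤ k - 1 ∧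
    (∀ i, IsPrimeFilter (P i)) ∧ Function.Injective P ∧ G = ⋂ i, P i

section AuxRL

open ResiduatedLattice

variable {α : Type*} [ResiduatedLattice α]

lemma rl_le_one (a : α) : a ≤ 1 := (one_eq_top (α := α)) ▸ le_top

lemma rl_mul_le_mul_right {a b : α} (h : a ≤ b) (c : α) : a * c ≤ b * c :=
  (adjunction a c (b * c)).2 (h.trans ((adjunction b c (b * c)).1 le_rfl))

lemma rl_mul_le_mul {a b c d : α} (h1 : a ≤ b) (h2 : c ≤ d) : a * c ≤ b * d := by
  refine (rl_mul_le_mul_right h1 c).trans ?_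
  rw [mul_comm b c, mul_comm b d]
  exact rl_mul_le_mul_right h2 b

lemma rl_mul_le_left (a b : α) : a * b ≤ a := by
  have := rl_mul_le_mul (le_refl a) (rl_le_one b)
  rwa [mul_one] at this

lemma rl_mul_le_right (a b : α) : a * b ≤ b := by
  rw [mul_comm]; exact rl_mul_le_left b a

lemma rl_mul_sup (a b c : α) : a * (b ⊔ c) = a * b ⊔ a * c := by
  apply le_antisymm
  · rw [mul_comm]
    refine (adjunction _ _ _).2 (sup_le ?_ ?_)
    · exact (adjunction b a _).1 (by rw [mul_comm]; exact le_sup_left)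
    · exact (adjunction c a _).1 (by rw [mul_comm]; exact le_sup_right)
  · exact sup_le (rl_mul_le_mul le_rfl le_sup_left) (rl_mul_le_mul le_rfl le_sup_right)

lemma rl_mul_finsetSup {ι : Type*} (s : Finset ι) (a : α) (f : ι → α) :
    a * s.sup f = s.sup fun i => a * f i := by
  induction s using Finset.cons_induction with
  | empty => simp only [Finset.sup_empty]; exact le_antisymm (rl_mul_le_right a ⊥) bot_le
  | cons t s h ih => rw [Finset.sup_cons, Finset.sup_cons, rl_mul_sup, ih]

lemma rl_sup_mul (a b c : α) : (b ⊔ c) * a = b * a ⊔ c * a := by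
  rw [mul_comm, rl_mul_sup, mul_comm a b, mul_comm a c]

lemma rl_prod_sup_le {ι : Type*} (s : Finset ι) (a : α) (f : ι → α) :
    (∏ i ∈ s, (a ⊔ f i)) ≤ a ⊔ ∏ i ∈ s, f i := by
  induction s using Finset.cons_induction with
  | empty => simpa using le_sup_right
  | cons t s h ih =>
    rw [Finset.prod_cons, Finset.prod_cons]
    calc (a ⊔ f t) * ∏ i ∈ s, (a ⊔ f i)
        ≤ (a ⊔ f t) * (a ⊔ ∏ i ∈ s, f i) := rl_mul_le_mul le_rfl ih
      _ = (a ⊔ f t) * a ⊔ (a ⊔ f t) * (∏ i ∈ s, f i) := rl_mul_sup _ _ _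
      _ ≤ a ⊔ f t * ∏ i ∈ s, f i := by
          apply sup_le
          · exact le_sup_of_le_left (rl_mul_le_right _ _)
          · rw [rl_sup_mul]
            exact sup_le (le_sup_of_le_left (rl_mul_le_left _ _)) le_sup_right

lemma rl_sup_pow_le (x y : α) : ∀ m k : ℕ, (x ⊔ y) ^ (m + k) ≤ x ^ m ⊔ y ^ k := by
  intro m
  induction m with
  | zero =>
    intro k
    exact le_trans (rl_le_one _) (by rw [pow_zero]; exact le_sup_left)
  | succ m ihm =>
    intro k
    induction k with
    | zero => exact le_trans (rl_le_one _) (by rw [pow_zero]; exact le_sup_right)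
    | succ k ihk =>
      have hsplit : (x ⊔ y) ^ (m + 1 + (k + 1)) = (x ⊔ y) * (x ⊔ y) ^ (m + (k + 1)) := by
        rw [show m + 1 + (k + 1) = (m + (k + 1)) + 1 from by omega, pow_succ']
      have hsplit2 : (m + (k+1)) = (m + 1 + k) := by omega
      calc (x ⊔ y) ^ (m + 1 + (k + 1)) = (x ⊔ y) * (x ⊔ y) ^ (m + (k + 1)) := hsplit
        _ = x * (x ⊔ y) ^ (m + (k + 1)) ⊔ y * (x ⊔ y) ^ (m + 1 + k) := by
            rw [rl_sup_mul]; nth_rewrite 2 [hsplit2]; rfl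
        _ ≤ x * (x ^ m ⊔ y ^ (k + 1)) ⊔ y * (x ^ (m + 1) ⊔ y ^ k) :=
            sup_le_sup (rl_mul_le_mul le_rfl (ihm (k+1))) (rl_mul_le_mul le_rfl ihk)
        _ ≤ x ^ (m + 1) ⊔ y ^ (k + 1) := by
            rw [rl_mul_sup, rl_mul_sup]
            apply sup_le <;> apply sup_le
            · rw [← pow_succ']; exact le_sup_left
            · exact le_sup_of_le_right (rl_mul_le_right _ _)
            · exact le_sup_of_le_left (rl_mul_le_right _ _)
            · rw [← pow_succ']; exact le_sup_right

end AuxRL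

section AuxFilter

open ResiduatedLattice

variable {α : Type*} [ResiduatedLattice α]

lemma IsFilter.top_mem {F : Set α} (hF : IsFilter F) : (⊤ : α) ∈ F := by
  obtain ⟨⟨x, hx⟩, -, up⟩ := hF
  exact up x hx ⊤ le_top

lemma IsFilter.one_mem {F : Set α} (hF : IsFilter F) : (1 : α) ∈ F := by
  rw [one_eq_top]; exact hF.top_mem

lemma IsFilter.mem_of_le {F : Set α} (hF : IsFilter F) {a b : α} (ha : a ∈ F) (h : a ≤ b) :
    b ∈ F := hF.2.2 a ha b h

lemma IsFilter.mul_mem {F : Set α} (hF : IsFilter F) {a b : α} (ha : a ∈ F) (hb : b ∈ F) :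
    a * b ∈ F := hF.2.1 a ha b hb

lemma IsFilter.eq_univ_of_bot_mem {F : Set α} (hF : IsFilter F) (h : (⊥ : α) ∈ F) :
    F = Set.univ := Set.eq_univ_of_forall fun b => hF.mem_of_le h bot_le

lemma IsFilter.listProd_mem {F : Set α} (hF : IsFilter F) {l : List α} (h : ∀ x ∈ l, x ∈ F) :
    l.prod ∈ F := by
  induction l with
  | nil => simpa using hF.one_mem
  | cons x l ih =>
    rw [List.prod_cons]
    exact hF.mul_mem (h x (List.mem_cons_self)) (ih fun y hy => h y (List.mem_cons_of_mem _ hy))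

lemma IsFilter.finsetProd_mem {F : Set α} (hF : IsFilter F) {ι : Type*} {s : Finset ι}
    {f : ι → α} (h : ∀ i ∈ s, f i ∈ F) : (∏ i ∈ s, f i) ∈ F :=
  Finset.prod_induction f (· ∈ F) (fun _ _ ha hb => hF.mul_mem ha hb) hF.one_mem h

lemma IsFilter.pow_mem {F : Set α} (hF : IsFilter F) {x : α} (h : x ∈ F) (k : ℕ) :
    x ^ k ∈ F := by
  induction k with
  | zero => rw [pow_zero]; exact hF.one_mem
  | succ k ih => rw [pow_succ]; exact hF.mul_mem ih h

/-- Explicit description of the filter generated by a set. -/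
def rlGen (X : Set α) : Set α := {a | ∃ l : List α, (∀ x ∈ l, x ∈ X) ∧ l.prod ≤ a}

lemma isFilter_rlGen (X : Set α) : IsFilter (rlGen X) := by
  refine ⟨⟨⊤, [], by simp, le_top⟩, ?_, ?_⟩
  · rintro a ⟨l₁, h₁, hle₁⟩ b ⟨l₂, h₂, hle₂⟩
    refine ⟨l₁ ++ l₂, ?_, ?_⟩
    · intro x hx
      rcases List.mem_append.1 hx with h | h
      · exact h₁ x h
      · exact h₂ x h
    · rw [List.prod_append]; exact rl_mul_le_mul hle₁ hle₂
  · rintro a ⟨l, h, hle⟩ b hab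
    exact ⟨l, h, hle.trans hab⟩

lemma subset_rlGen (X : Set α) : X ⊆ rlGen X := fun x hx =>
  ⟨[x], by simpa using hx, by simp⟩

lemma rlGen_subset {X G : Set α} (hG : IsFilter G) (h : X ⊆ G) : rlGen X ⊆ G := by
  rintro a ⟨l, hl, hle⟩
  exact hG.mem_of_le (hG.listProd_mem fun x hx => h (hl x hx)) hle

lemma filterGen_eq_rlGen (X : Set α) : filterGen X = rlGen X := by
  apply subset_antisymm
  · exact Set.sInter_subset_of_mem ⟨isFilter_rlGen X, subset_rlGen X⟩
  · exact Set.subset_sInter fun G hG => rlGen_subset hG.1 hG.2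

lemma isFilter_filterGen (X : Set α) : IsFilter (filterGen X) := by
  rw [filterGen_eq_rlGen]; exact isFilter_rlGen X

lemma subset_filterGen (X : Set α) : X ⊆ filterGen X := by
  rw [filterGen_eq_rlGen]; exact subset_rlGen X

lemma filterGen_subset {X G : Set α} (hG : IsFilter G) (h : X ⊆ G) : filterGen X ⊆ G := by
  rw [filterGen_eq_rlGen]; exact rlGen_subset hG h

lemma mem_filterGen_iUnion {N : ℕ} {G : Fin N → Set α} (hG : ∀ i, IsFilter (G i)) {a : α} :
    a ∈ filterGen (⋃ i, G i) ↔ ∃ c : Fin N → α, (∀ i, c i ∈ G i) ∧ (∏ i, c i) ≤ a := by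
  classical
  constructor
  · rw [filterGen_eq_rlGen]
    rintro ⟨l, hl, hle⟩
    suffices H : ∃ c : Fin N → α, (∀ i, c i ∈ G i) ∧ (∏ i, c i) ≤ l.prod by
      obtain ⟨c, hc, hcle⟩ := H
      exact ⟨c, hc, hcle.trans hle⟩
    clear hle
    induction l with
    | nil => exact ⟨fun _ => 1, fun i => (hG i).one_mem, by simp⟩
    | cons x l ih =>
      obtain ⟨c, hc, hcle⟩ := ih fun y hy => hl y (List.mem_cons_of_mem _ hy)
      obtain ⟨i₀, hxi⟩ := Set.mem_iUnion.1 (hl x (List.mem_cons_self))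
      refine ⟨Function.update c i₀ (x * c i₀), ?_, ?_⟩
      · intro i
        rcases eq_or_ne i i₀ with rfl | hne
        · rw [Function.update_self]; exact (hG i).mul_mem hxi (hc i)
        · rw [Function.update_of_ne hne]; exact hc i
      · rw [Finset.prod_update_of_mem (Finset.mem_univ i₀), List.prod_cons]
        calc (x * c i₀) * ∏ i ∈ Finset.univ \ {i₀}, c i
            = x * (c i₀ * ∏ i ∈ Finset.univ.erase i₀, c i) := by
              rw [mul_assoc, Finset.erase_eq]
          _ = x * ∏ i, c i := by rw [Finset.mul_prod_erase _ _ (Finset.mem_univ i₀)]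
          _ ≤ x * l.prod := rl_mul_le_mul le_rfl hcle
  · rintro ⟨c, hc, hle⟩
    refine (isFilter_filterGen _).mem_of_le ((isFilter_filterGen _).finsetProd_mem ?_) hle
    exact fun i _ => subset_filterGen _ (Set.mem_iUnion.2 ⟨i, hc i⟩)

lemma rl_prod_le {ι : Type*} {s : Finset ι} (f : ι → α) {j : ι} (hj : j ∈ s) :
    (∏ i ∈ s, f i) ≤ f j := by
  classical
  rw [← Finset.mul_prod_erase s f hj]
  exact rl_mul_le_left _ _

lemma isFilter_coann {F : Set α} (hF : IsFilter F) (x : α) : IsFilter (coann F x) := by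
  refine ⟨⟨⊤, ?_⟩, ?_, ?_⟩
  · show x ⊔ ⊤ ∈ F
    rw [sup_top_eq]; exact hF.top_mem
  · intro a ha b hb
    show x ⊔ a * b ∈ F
    refine hF.mem_of_le (hF.mul_mem ha hb) ?_
    rw [rl_mul_sup, rl_sup_mul, rl_sup_mul]
    refine sup_le (sup_le ?_ ?_) (sup_le ?_ ?_)
    · exact le_sup_of_le_left (rl_mul_le_left _ _)
    · exact le_sup_of_le_left (rl_mul_le_right _ _)
    · exact le_sup_of_le_left (rl_mul_le_left _ _)
    · exact le_sup_right
  · intro a ha b hab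
    exact hF.mem_of_le ha (sup_le_sup_left hab x)

lemma subset_coann {F : Set α} (hF : IsFilter F) (x : α) : F ⊆ coann F x := fun _ ha =>
  hF.mem_of_le ha le_sup_right

lemma rl_finsetSup_sup_const {ι : Type*} {s : Finset ι} (hs : s.Nonempty) (f : ι → α) (a : α) :
    (s.sup fun i => f i ⊔ a) = s.sup f ⊔ a := by
  induction hs using Finset.Nonempty.cons_induction with
  | singleton b => simp
  | cons t s hts hs ih =>
    rw [Finset.sup_cons, Finset.sup_cons, ih]
    ac_rfl

end AuxFilter

section AuxPrime

open ResiduatedLattice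

variable {α : Type*} [ResiduatedLattice α]

lemma IsPrimeFilter.bot_not_mem {P : Set α} (hP : IsPrimeFilter P) : (⊥ : α) ∉ P :=
  fun h => hP.2.1 (hP.1.eq_univ_of_bot_mem h)

lemma IsPrimeFilter.exists_mem_of_finsetSup_mem {P : Set α} (hP : IsPrimeFilter P)
    {ι : Type*} {s : Finset ι} {f : ι → α} (h : s.sup f ∈ P) : ∃ i ∈ s, f i ∈ P := by
  induction s using Finset.cons_induction with
  | empty => exact absurd (by simpa using h) hP.bot_not_mem
  | cons t s hts ih =>
    rw [Finset.sup_cons] at h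
    rcases hP.2.2 _ _ h with h' | h'
    · exact ⟨t, Finset.mem_cons_self t s, h'⟩
    · obtain ⟨i, hi, hfi⟩ := ih h'
      exact ⟨i, Finset.mem_cons_of_mem hi, hfi⟩

lemma IsPrimeFilter.finsetSup_not_mem {P : Set α} (hP : IsPrimeFilter P)
    {ι : Type*} {s : Finset ι} {f : ι → α} (h : ∀ i ∈ s, f i ∉ P) : s.sup f ∉ P := by
  intro hsup
  obtain ⟨i, hi, hfi⟩ := hP.exists_mem_of_finsetSup_mem hsup
  exact h i hi hfi

lemma rl_mem_rlGen_insert {M : Set α} (hM : IsFilter M) {x a : α}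
    (h : a ∈ rlGen (insert x M)) : ∃ p ∈ M, ∃ k : ℕ, p * x ^ k ≤ a := by
  obtain ⟨l, hl, hle⟩ := h
  suffices H : ∃ p ∈ M, ∃ k : ℕ, p * x ^ k ≤ l.prod by
    obtain ⟨p, hp, k, hk⟩ := H
    exact ⟨p, hp, k, hk.trans hle⟩
  clear hle
  induction l with
  | nil =>
    refine ⟨⊤, hM.top_mem, 0, ?_⟩
    simp only [pow_zero, mul_one, List.prod_nil, ← one_eq_top, le_refl]
  | cons y l ih =>
    obtain ⟨p, hp, k, hk⟩ := ih fun z hz => hl z (List.mem_cons_of_mem _ hz)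
    rw [List.prod_cons]
    rcases hl y (List.mem_cons_self) with rfl | hyM
    · refine ⟨p, hp, k + 1, ?_⟩
      have hstep : p * y ^ (k + 1) = y * (p * y ^ k) := by
        rw [pow_succ, mul_comm (y ^ k) y, ← mul_assoc, mul_comm p y, mul_assoc]
      calc p * y ^ (k + 1) = y * (p * y ^ k) := hstep
        _ ≤ y * l.prod := rl_mul_le_mul le_rfl hk
    · refine ⟨y * p, hM.mul_mem hyM hp, k, ?_⟩
      calc (y * p) * x ^ k = y * (p * x ^ k) := by rw [mul_assoc]
        _ ≤ y * l.prod := rl_mul_le_mul le_rfl hk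

theorem rl_prime_separation {F C : Set α} (hF : IsFilter F) (hC : IsJoinClosed C)
    (hFC : ∀ c ∈ C, c ∉ F) :
    ∃ P : Set α, IsPrimeFilter P ∧ F ⊆ P ∧ ∀ c ∈ C, c ∉ P := by
  set S : Set (Set α) := {G | IsFilter G ∧ F ⊆ G ∧ ∀ c ∈ C, c ∉ G} with hS
  have hzorn : ∀ c ⊆ S, IsChain (· ⊆ ·) c → c.Nonempty → ∃ ub ∈ S, ∀ s ∈ c, s ⊆ ub := by
    intro c hcS hchain hcne
    refine ⟨⋃₀ c, ⟨⟨?_, ?_, ?_⟩, ?_, ?_⟩, fun s hs => Set.subset_sUnion_of_mem hs⟩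
    · obtain ⟨G, hG⟩ := hcne
      exact ⟨⊤, Set.mem_sUnion.2 ⟨G, hG, (hcS hG).1.top_mem⟩⟩
    · rintro a ⟨G₁, hG₁, ha⟩ b ⟨G₂, hG₂, hb⟩
      rcases eq_or_ne G₁ G₂ with rfl | hne
      · exact Set.mem_sUnion.2 ⟨G₁, hG₁, (hcS hG₁).1.mul_mem ha hb⟩
      · rcases hchain hG₁ hG₂ hne with hsub | hsub
        · exact Set.mem_sUnion.2 ⟨G₂, hG₂, (hcS hG₂).1.mul_mem (hsub ha) hb⟩
        · exact Set.mem_sUnion.2 ⟨G₁, hG₁, (hcS hG₁).1.mul_mem ha (hsub hb)⟩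
    · rintro a ⟨G₁, hG₁, ha⟩ b hab
      exact Set.mem_sUnion.2 ⟨G₁, hG₁, (hcS hG₁).1.mem_of_le ha hab⟩
    · obtain ⟨G, hG⟩ := hcne
      exact (hcS hG).2.1.trans (Set.subset_sUnion_of_mem hG)
    · rintro x hx ⟨G₁, hG₁, hxG⟩
      exact (hcS hG₁).2.2 x hx hxG
  obtain ⟨M, hFM, hM⟩ := zorn_subset_nonempty S hzorn F ⟨hF, subset_rfl, hFC⟩
  obtain ⟨hMfil, hFMsub, hMC⟩ := hM.prop
  have key : ∀ x, x ∉ M → ∃ c ∈ C, ∃ p ∈ M, ∃ k : ℕ, p * x ^ k ≤ c := by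
    intro x hx
    by_contra hcon
    push_neg at hcon
    have hdis : ∀ c ∈ C, c ∉ rlGen (insert x M) := by
      intro c hc hcmem
      obtain ⟨p, hp, k, hk⟩ := rl_mem_rlGen_insert hMfil hcmem
      exact hcon c hc p hp k hk
    have hmem : rlGen (insert x M) ∈ S :=
      ⟨isFilter_rlGen _, hFMsub.trans ((Set.subset_insert x M).trans (subset_rlGen _)), hdis⟩
    have hsub : M ⊆ rlGen (insert x M) := (Set.subset_insert x M).trans (subset_rlGen _)
    exact hx (hM.2 hmem hsub (subset_rlGen _ (Set.mem_insert x M)))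
  refine ⟨M, ⟨hMfil, ?_, ?_⟩, hFMsub, hMC⟩
  · obtain ⟨c₀, hc₀⟩ := hC.1
    exact (Set.ne_univ_iff_exists_notMem M).2 ⟨c₀, hMC c₀ hc₀⟩
  · intro x y hxy
    by_contra hcon
    push_neg at hcon
    obtain ⟨c₁, hc₁, p, hp, k, hk⟩ := key x hcon.1
    obtain ⟨c₂, hc₂, q, hq, j, hj⟩ := key y hcon.2
    have hw : (p * q) * (x ⊔ y) ^ (k + j) ∈ M :=
      hMfil.mul_mem (hMfil.mul_mem hp hq) (hMfil.pow_mem hxy _)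
    have hle : (p * q) * (x ⊔ y) ^ (k + j) ≤ c₁ ⊔ c₂ :=
      calc (p * q) * (x ⊔ y) ^ (k + j) ≤ (p * q) * (x ^ k ⊔ y ^ j) :=
            rl_mul_le_mul le_rfl (rl_sup_pow_le x y k j)
        _ = (p * q) * x ^ k ⊔ (p * q) * y ^ j := rl_mul_sup _ _ _
        _ ≤ (p * x ^ k) ⊔ (q * y ^ j) := by
            apply sup_le_sup
            · rw [mul_comm p q, mul_assoc]; exact rl_mul_le_right _ _
            · rw [mul_assoc]; exact rl_mul_le_right _ _
        _ ≤ c₁ ⊔ c₂ := sup_le_sup hk hj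
    exact hMC _ (hC.2 c₁ hc₁ c₂ hc₂) (hMfil.mem_of_le hw hle)

theorem rl_exists_prime_superset {G : Set α} (hG : IsFilter G) (hne : G ≠ Set.univ) :
    ∃ P : Set α, IsPrimeFilter P ∧ G ⊆ P := by
  have hbot : (⊥ : α) ∉ G := fun h => hne (hG.eq_univ_of_bot_mem h)
  obtain ⟨P, hP, hGP, -⟩ :=
    rl_prime_separation (C := {(⊥ : α)}) hG ⟨⟨⊥, rfl⟩, by simp⟩ (by simpa using hbot)
  exact ⟨P, hP, hGP⟩

theorem rl_exists_minPrime_below {F P : Set α} (hF : IsFilter F) (hP : IsPrimeFilter P)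
    (hFP : F ⊆ P) : ∃ Q : Set α, IsMinPrimeOver F Q ∧ Q ⊆ P := by
  set S : Set (Set α) := {Q | IsPrimeFilter Q ∧ F ⊆ Q ∧ Q ⊆ P} with hS
  have hzorn : ∀ c ⊆ S, IsChain (· ⊆ ·) c → c.Nonempty → ∃ lb ∈ S, ∀ s ∈ c, lb ⊆ s := by
    intro c hcS hchain hcne
    obtain ⟨G₀, hG₀⟩ := hcne
    refine ⟨⋂₀ c, ⟨⟨⟨⟨⊤, Set.mem_sInter.2 fun G hG => (hcS hG).1.1.top_mem⟩, ?_, ?_⟩, ?_⟩, ?_, ?_⟩,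
      fun s hs => Set.sInter_subset_of_mem hs⟩
    · intro a ha b hb
      exact Set.mem_sInter.2 fun G hG =>
        (hcS hG).1.1.mul_mem (Set.mem_sInter.1 ha G hG) (Set.mem_sInter.1 hb G hG)
    · intro a ha b hab
      exact Set.mem_sInter.2 fun G hG => (hcS hG).1.1.mem_of_le (Set.mem_sInter.1 ha G hG) hab
    · constructor
      · intro h
        apply (hcS hG₀).1.2.1
        apply Set.eq_univ_of_univ_subset
        rw [← h]
        exact Set.sInter_subset_of_mem hG₀
      · intro x y hxy
        by_contra hcon
        push_neg at hcon
        obtain ⟨hx, hy⟩ := hcon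
        rw [Set.mem_sInter] at hx hy
        push_neg at hx hy
        obtain ⟨G₁, hG₁, hxG⟩ := hx
        obtain ⟨G₂, hG₂, hyG⟩ := hy
        rcases eq_or_ne G₁ G₂ with rfl | hne
        · rcases (hcS hG₁).1.2.2 x y (Set.mem_sInter.1 hxy G₁ hG₁) with h | h
          · exact hxG h
          · exact hyG h
        · rcases hchain hG₁ hG₂ hne with hsub | hsub
          · rcases (hcS hG₁).1.2.2 x y (Set.mem_sInter.1 hxy G₁ hG₁) with h | h
            · exact hxG h
            · exact hyG (hsub h)
          · rcases (hcS hG₂).1.2.2 x y (Set.mem_sInter.1 hxy G₂ hG₂) with h | h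
            · exact hxG (hsub h)
            · exact hyG h
    · intro a ha
      exact Set.mem_sInter.2 fun G hG => (hcS hG).2.1 ha
    · exact (Set.sInter_subset_of_mem hG₀).trans (hcS hG₀).2.2
  obtain ⟨M, hMP, hM⟩ := zorn_superset_nonempty S hzorn P ⟨hP, hFP, subset_rfl⟩
  refine ⟨M, ⟨hM.prop.1, hM.prop.2.1, ?_⟩, hM.prop.2.2⟩
  intro Q hQ hFQ hQM
  exact subset_antisymm hQM (hM.2 ⟨hQ, hFQ, hQM.trans hM.prop.2.2⟩ hQM)

lemma divisorsF_subset {F P : Set α} (hP : IsPrimeFilter P) (hFP : F ⊆ P) :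
    divisorsF F P ⊆ P := by
  rintro a ⟨x, hx, hxa⟩
  rcases hP.2.2 x a (hFP hxa) with h | h
  · exact absurd h hx
  · exact h

lemma subset_divisorsF {F P : Set α} (hF : IsFilter F) (hP : P ≠ Set.univ) :
    F ⊆ divisorsF F P := by
  intro a ha
  obtain ⟨x, hx⟩ := (Set.ne_univ_iff_exists_notMem P).1 hP
  exact ⟨x, hx, hF.mem_of_le ha le_sup_right⟩

lemma divisorsF_subset_prime {F P Q : Set α} (hQ : IsPrimeFilter Q) (hFQ : F ⊆ Q)
    (hQP : Q ⊆ P) : divisorsF F P ⊆ Q := by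
  rintro a ⟨x, hx, hxa⟩
  rcases hQ.2.2 x a (hFQ hxa) with h | h
  · exact absurd (hQP h) hx
  · exact h

theorem rl_exists_prime_avoiding {F P : Set α} (hF : IsFilter F) (hP : IsPrimeFilter P)
    (hFP : F ⊆ P) {a : α} (ha : a ∉ divisorsF F P) :
    ∃ Q : Set α, IsPrimeFilter Q ∧ F ⊆ Q ∧ Q ⊆ P ∧ a ∉ Q := by
  set C : Set α := insert a ({x | x ∉ P} ∪ {c | ∃ x, x ∉ P ∧ c = a ⊔ x}) with hC
  have hCmem : ∀ c, c ∈ C ↔ c = a ∨ c ∉ P ∨ ∃ x, x ∉ P ∧ c = a ⊔ x := by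
    intro c
    simp [hC, Set.mem_insert_iff, Set.mem_union]
  have hCjoin : IsJoinClosed C := by
    constructor
    · exact ⟨a, Set.mem_insert a _⟩
    · intro u hu v hv
      rw [hCmem] at hu hv ⊢
      rcases hu with hu | hu | ⟨x, hx, hux⟩
      · rcases hv with hv | hv | ⟨y, hy, hvy⟩
        · exact Or.inl (by rw [hu, hv, sup_idem])
        · exact Or.inr (Or.inr ⟨v, hv, by rw [hu]⟩)
        · exact Or.inr (Or.inr ⟨y, hy, by rw [hu, hvy, ← sup_assoc, sup_idem]⟩)
      · rcases hv with hv | hv | ⟨y, hy, hvy⟩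
        · exact Or.inr (Or.inr ⟨u, hu, by rw [hv, sup_comm]⟩)
        · refine Or.inr (Or.inl fun hmem => ?_)
          rcases hP.2.2 u v hmem with h | h
          · exact hu h
          · exact hv h
        · refine Or.inr (Or.inr ⟨u ⊔ y, fun hmem => ?_, ?_⟩)
          · rcases hP.2.2 u y hmem with h | h
            · exact hu h
            · exact hy h
          · rw [hvy, ← sup_assoc, sup_comm u a, sup_assoc]
      · rcases hv with hv | hv | ⟨y, hy, hvy⟩
        · exact Or.inr (Or.inr ⟨x, hx, by rw [hux, hv, sup_comm (a ⊔ x) a, ← sup_assoc, sup_idem]⟩)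
        · refine Or.inr (Or.inr ⟨x ⊔ v, fun hmem => ?_, by rw [hux, sup_assoc]⟩)
          rcases hP.2.2 x v hmem with h | h
          · exact hx h
          · exact hv h
        · refine Or.inr (Or.inr ⟨x ⊔ y, fun hmem => ?_, by rw [hux, hvy, sup_sup_sup_comm, sup_idem]⟩)
          rcases hP.2.2 x y hmem with h | h
          · exact hx h
          · exact hy h
  have hCF : ∀ c ∈ C, c ∉ F := by
    intro c hc hcF
    rw [hCmem] at hc
    obtain ⟨x₀, hx₀⟩ := (Set.ne_univ_iff_exists_notMem P).1 hP.2.1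
    rcases hc with hc | hc | ⟨x, hx, hcx⟩
    · rw [hc] at hcF
      exact ha ⟨x₀, hx₀, hF.mem_of_le hcF le_sup_right⟩
    · exact hc (hFP hcF)
    · rw [hcx] at hcF
      exact ha ⟨x, hx, by rwa [sup_comm x a]⟩
  obtain ⟨Q, hQ, hFQ, hQC⟩ := rl_prime_separation hF hCjoin hCF
  refine ⟨Q, hQ, hFQ, ?_, ?_⟩
  · intro q hq
    by_contra hqP
    exact hQC q ((hCmem q).2 (Or.inr (Or.inl hqP))) hq
  · exact fun haQ => hQC a (Set.mem_insert a _) haQ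

lemma rl_minPrime_char {F m : Set α} (hF : IsFilter F) (hm : IsMinPrimeOver F m) {a : α}
    (ha : a ∈ m) : ∃ b, b ∉ m ∧ a ⊔ b ∈ F := by
  by_contra h
  push_neg at h
  have haD : a ∉ divisorsF F m := by
    rintro ⟨x, hx, hxa⟩
    exact h x hx (by rwa [sup_comm a x])
  obtain ⟨Q, hQ, hFQ, hQm, haQ⟩ := rl_exists_prime_avoiding hF hm.1 hm.2.1 haD
  exact haQ ((hm.2.2 Q hQ hFQ hQm) ▸ ha)

lemma rl_divisorsF_eq_sInter {F P : Set α} (hF : IsFilter F) (hP : IsPrimeFilter P)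
    (hFP : F ⊆ P) :
    divisorsF F P = ⋂₀ {Q : Set α | IsMinPrimeOver F Q ∧ Q ⊆ P} := by
  apply subset_antisymm
  · intro b hb
    exact Set.mem_sInter.2 fun Q hQ => divisorsF_subset_prime hQ.1.1 hQ.1.2.1 hQ.2 hb
  · intro b hb
    by_contra hbD
    by_cases hbP : b ∈ P
    · obtain ⟨Q₀, hQ₀, hFQ₀, hQ₀P, hbQ₀⟩ := rl_exists_prime_avoiding hF hP hFP hbD
      obtain ⟨Q, hQ, hQQ₀⟩ := rl_exists_minPrime_below hF hQ₀ hFQ₀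
      exact hbQ₀ (hQQ₀ (Set.mem_sInter.1 hb Q ⟨hQ, hQQ₀.trans hQ₀P⟩))
    · obtain ⟨Q, hQ, hQP⟩ := rl_exists_minPrime_below hF hP hFP
      exact hbP (hQP (Set.mem_sInter.1 hb Q ⟨hQ, hQP⟩))

end AuxPrime

section AuxComb

open ResiduatedLattice

variable {α : Type*} [ResiduatedLattice α]

/-- If the `x i` pairwise satisfy `x i ⊔ x j ∈ F`, then the join of the products over
complements of singletons belongs to `F`. -/
lemma rl_sup_prod_erase_mem {N : ℕ} {F : Set α} (hF : IsFilter F) (x : Fin N → α)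
    (hx : ∀ i j, i ≠ j → x i ⊔ x j ∈ F) (s : Finset (Fin N)) (hs : s.Nonempty) :
    (s.sup fun j => ∏ i ∈ s.erase j, x i) ∈ F := by
  classical
  induction hs using Finset.Nonempty.cons_induction with
  | singleton b => simpa using hF.one_mem
  | cons t s hts hs ih =>
    have hgoal : ((Finset.cons t s hts).sup fun j => ∏ i ∈ (Finset.cons t s hts).erase j, x i)
        = (∏ i ∈ s, x i) ⊔ x t * (s.sup fun j => ∏ i ∈ s.erase j, x i) := by
      rw [Finset.sup_cons, Finset.erase_cons hts, rl_mul_finsetSup]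
      congr 1
      apply Finset.sup_congr rfl
      intro j hj
      have hne : t ≠ j := fun h => hts (h ▸ hj)
      rw [Finset.erase_cons_of_ne hts hne, Finset.prod_cons]
    rw [hgoal]
    set A := s.sup fun j => ∏ i ∈ s.erase j, x i with hA
    have h1 : (∏ i ∈ s, (x t ⊔ x i)) ∈ F :=
      hF.finsetProd_mem fun i hi => hx t i fun h => hts (h ▸ hi)
    have h2 : A * ∏ i ∈ s, (x t ⊔ x i) ∈ F := hF.mul_mem ih h1
    refine hF.mem_of_le h2 ?_
    calc A * ∏ i ∈ s, (x t ⊔ x i) ≤ A * (x t ⊔ ∏ i ∈ s, x i) :=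
          rl_mul_le_mul le_rfl (rl_prod_sup_le s (x t) x)
      _ = A * x t ⊔ A * ∏ i ∈ s, x i := rl_mul_sup _ _ _
      _ ≤ (∏ i ∈ s, x i) ⊔ x t * A := by
          apply sup_le
          · rw [mul_comm A (x t)]; exact le_sup_right
          · exact le_sup_of_le_left (rl_mul_le_right _ _)

/-- From the no-injection hypothesis we obtain a finite enumeration bound. -/
lemma rl_card_bound {n : ℕ} {S : Set (Set α)}
    (h : ∀ g : Fin (n + 1) → Set α, (∀ i, g i ∈ S) → ¬ Function.Injective g) :
    ∃ T : Finset (Set α), ↑T = S ∧ T.card ≤ n := by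
  classical
  have hfin : S.Finite := by
    by_contra hinf
    have : Infinite ↥S := Set.infinite_coe_iff.2 hinf
    let e : ℕ ↪ ↥S := Infinite.natEmbedding ↥S
    apply h (fun i : Fin (n + 1) => ((e i.1 : ↥S) : Set α)) (fun i => (e i.1).2)
    intro i j hij
    exact Fin.ext (e.injective (Subtype.coe_injective hij))
  refine ⟨hfin.toFinset, hfin.coe_toFinset, ?_⟩
  by_contra hcard
  push_neg at hcard
  obtain ⟨t, hts, htc⟩ := Finset.exists_subset_card_eq (show n + 1 ≤ hfin.toFinset.card from hcard)
  let e := t.equivFinOfCardEq htc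
  apply h (fun i => ((e.symm i : ↥t) : Set α))
    (fun i => hfin.mem_toFinset.1 (hts (e.symm i).2))
  intro i j hij
  exact e.symm.injective (Subtype.coe_injective hij)

end AuxComb


/-- Proposition 4.5: the seven characterizations of `n`-normality with
respect to a filter `F` are equivalent. -/
theorem stmt_17 (F : Set α) (hF : IsFilter F) (n : ℕ) (hn : 1 ≤ n) :
    List.TFAE [
      (∀ m : Fin (n + 1) → Set α, (∀ i, IsMinPrimeOver F (m i)) → Function.Injective m →
        filterGen (⋃ i, m i) = Set.univ),
      nNormalWrt F n,
      (∀ P : Set α, IsPrimeFilter P → F ⊆ P → kPrime (n + 1) (divisorsF F P)),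
      (∀ x : Fin (n + 1) → α, (∀ i j, i ≠ j → x i ⊔ x j ∈ F) →
        filterGen (⋃ i, coann F (x i)) = Set.univ),
      (∀ x : Fin (n + 1) → α, (∀ i j, i ≠ j → x i ⊔ x j ∈ F) →
        ∃ a : Fin (n + 1) → α, (∀ i, a i ∈ coann F (x i)) ∧ (∏ i, a i) = ⊥),
      (∀ x : Fin (n + 1) → α,
        coann F (Finset.univ.sup x) =
          filterGen (⋃ i, coann F ((Finset.univ.erase i).sup x))),
      (∀ x : Fin (n + 1) → α, Finset.univ.sup x ∈ F →
        filterGen (⋃ i, coann F ((Finset.univ.erase i).sup x)) = Set.univ) ] := by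
  classical
  tfae_have 1 → 2 := by
    intro h1 P hP hFP m hm hinj
    have h := h1 m (fun i => (hm i).1) hinj
    have hsub : filterGen (⋃ i, m i) ⊆ P :=
      filterGen_subset hP.1 (Set.iUnion_subset fun i => (hm i).2)
    rw [h] at hsub
    exact hP.2.1 (Set.eq_univ_of_univ_subset hsub)
  tfae_have 2 → 1 := by
    intro h2 m hmin hinj
    by_contra hne
    obtain ⟨P, hP, hsub⟩ := rl_exists_prime_superset (isFilter_filterGen _) hne
    have hmP : ∀ i, m i ⊆ P := fun i =>
      ((Set.subset_iUnion m i).trans (subset_filterGen _)).trans hsub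
    exact h2 P hP ((hmin 0).2.1.trans (hmP 0)) m (fun i => ⟨hmin i, hmP i⟩) hinj
  tfae_have 2 → 3 := by
    intro h2 P hP hFP
    obtain ⟨T, hTS, hTcard⟩ :=
      rl_card_bound (S := {Q : Set α | IsMinPrimeOver F Q ∧ Q ⊆ P})
        (fun g hg => h2 P hP hFP g hg)
    refine ⟨?_, T.card, fun k => ((T.equivFin.symm k : ↥T) : Set α), by simpa using hTcard,
      ?_, ?_, ?_⟩
    · intro hD
      apply hP.2.1
      apply Set.eq_univ_of_univ_subset
      rw [← hD]
      exact divisorsF_subset hP hFP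
    · intro k
      have hmem : ((T.equivFin.symm k : ↥T) : Set α) ∈
          {Q : Set α | IsMinPrimeOver F Q ∧ Q ⊆ P} := by
        rw [← hTS]
        exact Finset.mem_coe.2 (T.equivFin.symm k).2
      exact hmem.1.1
    · intro k k' h
      exact T.equivFin.symm.injective (Subtype.coe_injective h)
    · rw [rl_divisorsF_eq_sInter hF hP hFP, ← hTS]
      ext b
      simp only [Set.mem_iInter, Set.mem_sInter, Finset.mem_coe]
      constructor
      · intro hb k
        exact hb _ (Finset.mem_coe.2 (T.equivFin.symm k).2)
      · intro hb Q hQ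
        have := hb (T.equivFin ⟨Q, Finset.mem_coe.1 hQ⟩)
        rwa [Equiv.symm_apply_apply] at this
  tfae_have 3 → 4 := by
    intro h3 x hx
    by_contra hne
    obtain ⟨P, hP, hGP⟩ := rl_exists_prime_superset (isFilter_filterGen _) hne
    have hFP : F ⊆ P :=
      ((subset_coann hF (x 0)).trans
        ((Set.subset_iUnion (fun i => coann F (x i)) 0).trans (subset_filterGen _))).trans hGP
    obtain ⟨hDne, m', Pk, hm'le, hPk, hPkinj, hDeq⟩ := h3 P hP hFP
    have hxD : ∀ i, x i ∉ divisorsF F P := by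
      rintro i ⟨z, hz, hzx⟩
      refine hz (hGP (subset_filterGen _ (Set.mem_iUnion.2 ⟨i, ?_⟩)))
      show x i ⊔ z ∈ F
      rwa [sup_comm]
    have hk : ∀ i, ∃ k, x i ∉ Pk k := by
      intro i
      by_contra h
      push_neg at h
      exact (hDeq ▸ hxD i) (Set.mem_iInter.2 h)
    choose k hk using hk
    have hlt : Fintype.card (Fin m') < Fintype.card (Fin (n + 1)) := by
      simp only [Fintype.card_fin]
      have : m' ≤ n := by simpa using hm'le
      omega
    obtain ⟨i, j, hij, hkeq⟩ := Fintype.exists_ne_map_eq_of_card_lt k hlt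
    have hmem : x i ⊔ x j ∈ Pk (k i) := by
      have h1 : x i ⊔ x j ∈ divisorsF F P := subset_divisorsF hF hP.2.1 (hx i j hij)
      rw [hDeq] at h1
      exact Set.mem_iInter.1 h1 (k i)
    rcases (hPk (k i)).2.2 _ _ hmem with h | h
    · exact hk i h
    · rw [hkeq] at h
      exact hk j h
  tfae_have 4 → 5 := by
    intro h4 x hx
    have hbot : (⊥ : α) ∈ filterGen (⋃ i, coann F (x i)) := by
      rw [h4 x hx]; exact Set.mem_univ ⊥
    obtain ⟨c, hc, hle⟩ := (mem_filterGen_iUnion fun i => isFilter_coann hF (x i)).1 hbot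
    exact ⟨c, hc, le_bot_iff.1 hle⟩
  tfae_have 5 → 7 := by
    intro h5 x hsup
    have hpair : ∀ i j, i ≠ j →
        ((Finset.univ.erase i).sup x ⊔ (Finset.univ.erase j).sup x) ∈ F := by
      intro i j hij
      rw [← Finset.sup_union]
      have huniv : Finset.univ.erase i ∪ Finset.univ.erase j = Finset.univ := by
        ext u
        simp only [Finset.mem_union, Finset.mem_erase, Finset.mem_univ, and_true, iff_true]
        rcases eq_or_ne u i with rfl | h
        · exact Or.inr hij
        · exact Or.inl h
      rw [huniv]
      exact hsup
    obtain ⟨a, ha, hprod⟩ := h5 _ hpair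
    apply (isFilter_filterGen _).eq_univ_of_bot_mem
    have hm : (∏ i, a i) ∈ filterGen (⋃ i, coann F ((Finset.univ.erase i).sup x)) :=
      (isFilter_filterGen _).finsetProd_mem fun i _ =>
        subset_filterGen _ (Set.mem_iUnion.2 ⟨i, ha i⟩)
    rwa [hprod] at hm
  tfae_have 7 → 6 := by
    intro h7 x
    have herase : ∀ i : Fin (n + 1), (Finset.univ.erase i).Nonempty := by
      intro i
      rw [← Finset.card_pos, Finset.card_erase_of_mem (Finset.mem_univ i)]
      simp only [Finset.card_univ, Fintype.card_fin]
      omega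
    apply subset_antisymm
    · intro a ha
      have hsup' : (Finset.univ.sup fun i => x i ⊔ a) ∈ F := by
        rw [rl_finsetSup_sup_const Finset.univ_nonempty x a]
        exact ha
      have h := h7 (fun i => x i ⊔ a) hsup'
      have hrw : (fun i : Fin (n + 1) => coann F ((Finset.univ.erase i).sup fun j => x j ⊔ a))
          = fun i => coann F ((Finset.univ.erase i).sup x ⊔ a) := by
        funext i
        rw [rl_finsetSup_sup_const (herase i) x a]
      rw [hrw] at h
      have hbot : (⊥ : α) ∈ filterGen (⋃ i, coann F ((Finset.univ.erase i).sup x ⊔ a)) := by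
        rw [h]; exact Set.mem_univ ⊥
      obtain ⟨b, hb, hble⟩ := (mem_filterGen_iUnion fun i => isFilter_coann hF _).1 hbot
      have hmem : ∀ i, a ⊔ b i ∈ coann F ((Finset.univ.erase i).sup x) := by
        intro i
        show (Finset.univ.erase i).sup x ⊔ (a ⊔ b i) ∈ F
        rw [← sup_assoc]
        exact hb i
      have hprodmem : (∏ i, (a ⊔ b i)) ∈
          filterGen (⋃ i, coann F ((Finset.univ.erase i).sup x)) :=
        (isFilter_filterGen _).finsetProd_mem fun i _ =>
          subset_filterGen _ (Set.mem_iUnion.2 ⟨i, hmem i⟩)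
      refine (isFilter_filterGen _).mem_of_le hprodmem ?_
      calc (∏ i, (a ⊔ b i)) ≤ a ⊔ ∏ i, b i := rl_prod_sup_le _ a b
        _ ≤ a ⊔ ⊥ := sup_le_sup le_rfl hble
        _ = a := sup_bot_eq a
    · apply filterGen_subset (isFilter_coann hF _)
      apply Set.iUnion_subset
      intro i b hb
      exact hF.mem_of_le hb
        (sup_le_sup_right (Finset.sup_mono (Finset.erase_subset i Finset.univ)) b)
  tfae_have 6 → 7 := by
    intro h6 x hsup
    rw [← h6 x]
    exact Set.eq_univ_of_forall fun a => hF.mem_of_le hsup le_sup_left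
  tfae_have 7 → 2 := by
    intro h7 P hP hFP m hm hinj
    have hcd : ∀ i j : Fin (n + 1), ∃ cd : α × α,
        i ≠ j → cd.1 ∈ m i ∧ cd.1 ∉ m j ∧ cd.2 ∉ m i ∧ cd.1 ⊔ cd.2 ∈ F := by
      intro i j
      by_cases hij : i = j
      · exact ⟨(⊥, ⊥), fun h => absurd hij h⟩
      · have hnot : ¬ m i ⊆ m j := by
          intro hsub
          exact hij (hinj ((hm j).1.2.2 (m i) (hm i).1.1 (hm i).1.2.1 hsub))
        obtain ⟨c, hci, hcj⟩ := Set.not_subset.1 hnot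
        obtain ⟨d, hdi, hdF⟩ := rl_minPrime_char hF (hm i).1 hci
        exact ⟨(c, d), fun _ => ⟨hci, hcj, hdi, hdF⟩⟩
    choose cd hcd using hcd
    set X : Fin (n + 1) → α := fun i =>
      ((Finset.univ.erase i).sup fun j => (cd i j).2) ⊔
        ((Finset.univ.erase i).sup fun j => (cd j i).1) with hX
    have hXnot : ∀ i, X i ∉ m i := by
      intro i hXi
      rcases (hm i).1.1.2.2 _ _ hXi with h | h
      · obtain ⟨j, hj, hmem⟩ := (hm i).1.1.exists_mem_of_finsetSup_mem h
        exact (hcd i j (Ne.symm (Finset.mem_erase.1 hj).1)).2.2.1 hmem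
      · obtain ⟨j, hj, hmem⟩ := (hm i).1.1.exists_mem_of_finsetSup_mem h
        exact (hcd j i (Finset.mem_erase.1 hj).1).2.1 hmem
    have hXpair : ∀ i j, i ≠ j → X i ⊔ X j ∈ F := by
      intro i j hij
      refine hF.mem_of_le (hcd i j hij).2.2.2 (sup_le ?_ ?_)
      · refine le_trans (Finset.le_sup (f := fun k => (cd k j).1)
          (Finset.mem_erase.2 ⟨hij, Finset.mem_univ i⟩)) ?_
        exact le_trans le_sup_right le_sup_right
      · refine le_trans (Finset.le_sup (f := fun k => (cd i k).2)
          (Finset.mem_erase.2 ⟨Ne.symm hij, Finset.mem_univ j⟩)) ?_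
        exact le_trans le_sup_left le_sup_left
    have hzsup : (Finset.univ.sup fun j => ∏ i ∈ Finset.univ.erase j, X i) ∈ F :=
      rl_sup_prod_erase_mem hF X hXpair Finset.univ Finset.univ_nonempty
    have h7' := h7 _ hzsup
    have hsub : filterGen (⋃ i, coann F
        ((Finset.univ.erase i).sup fun j => ∏ i ∈ Finset.univ.erase j, X i)) ⊆ P := by
      apply filterGen_subset hP.1
      apply Set.iUnion_subset
      intro i b hb
      have hznot : ((Finset.univ.erase i).sup fun j => ∏ i' ∈ Finset.univ.erase j, X i') ∉ m i := by
        apply (hm i).1.1.finsetSup_not_mem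
        intro j hj hmem
        have hij : i ≠ j := Ne.symm (Finset.mem_erase.1 hj).1
        exact hXnot i ((hm i).1.1.1.mem_of_le hmem
          (rl_prod_le X (Finset.mem_erase.2 ⟨hij, Finset.mem_univ i⟩)))
      have hbm : ((Finset.univ.erase i).sup fun j => ∏ i' ∈ Finset.univ.erase j, X i') ⊔ b ∈ m i :=
        (hm i).1.2.1 hb
      rcases (hm i).1.1.2.2 _ _ hbm with h | h
      · exact absurd h hznot
      · exact (hm i).2 h
    rw [h7'] at hsub
    exact hP.2.1 (Set.eq_univ_of_univ_subset hsub)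
  tfae_finish
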